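/- For an invertible n×n real matrix B and any real number γ, the integral over the unit sphere S^{n-1} of |Bx|^{-γ} dx equals (1/|det B|) times the integral over S^{n-1} of |B^{-1}x|^{-(n-γ)} dx. -/

import Mathlib

open MeasureTheory Metric Set
open scoped ENNReal

noncomputable section

lemma prf_polar {E : Type*} [NormedAddCommGroup E] [NormedSpace ℝ E] [MeasurableSpace E]
    [BorelSpace E] [FiniteDimensional ℝ E] [Nontrivial E]
    (μ : Measure E) [μ.IsAddHaarMeasure]
    (G : E → ℝ≥0∞) (hG : Measurable G) :
    ∫⁻ x, G x ∂μ = ∫⁻ z : sphere (0:E) 1 × Ioi (0:ℝ),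
      G ((z.2 : ℝ) • (z.1 : E))
      ∂(μ.toSphere.prod (Measure.volumeIoiPow (Module.finrank ℝ E - 1))) := by
  have h1 : ∫⁻ x, G x ∂μ = ∫⁻ x : ({0}ᶜ : Set E), G x ∂(μ.comap (↑)) := by
    rw [lintegral_subtype_comap (measurableSet_singleton _).compl,
      restrict_compl_singleton]
  have hmeas : Measurable fun z : sphere (0:E) 1 × Ioi (0:ℝ) => G ((z.2 : ℝ) • (z.1 : E)) := by
    apply hG.comp
    exact ((continuous_subtype_val.comp continuous_snd).smul
      (continuous_subtype_val.comp continuous_fst)).measurable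
  rw [h1, ← (μ.measurePreserving_homeomorphUnitSphereProd).lintegral_comp hmeas]
  refine lintegral_congr fun x => ?_
  congr 1
  simp only [homeomorphUnitSphereProd_apply_snd_coe, homeomorphUnitSphereProd_apply_fst_coe]
  exact (smul_inv_smul₀ (norm_ne_zero_iff.2 x.2) _).symm

lemma prf_key (n : ℕ) (hn : 0 < n) (B : Matrix (Fin n) (Fin n) ℝ) (hB : IsUnit B.det) (γ : ℝ) :
    (∫⁻ ω : sphere (0 : EuclideanSpace ℝ (Fin n)) 1,
        ENNReal.ofReal (‖Matrix.toEuclideanLin B⁻¹ (ω : EuclideanSpace ℝ (Fin n))‖ ^ (-((n:ℝ) - γ)))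
        ∂(volume : Measure (EuclideanSpace ℝ (Fin n))).toSphere)
    = ENNReal.ofReal |B.det| *
      ∫⁻ ω : sphere (0 : EuclideanSpace ℝ (Fin n)) 1,
        ENNReal.ofReal (‖Matrix.toEuclideanLin B (ω : EuclideanSpace ℝ (Fin n))‖ ^ (-γ))
        ∂(volume : Measure (EuclideanSpace ℝ (Fin n))).toSphere := by
  haveI : Nontrivial (EuclideanSpace ℝ (Fin n)) :=
    Module.nontrivial_of_finrank_pos (R := ℝ) (by rw [finrank_euclideanSpace_fin]; omega)
  set μ : Measure (EuclideanSpace ℝ (Fin n)) := volume with hμ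
  set ℓ : EuclideanSpace ℝ (Fin n) →ₗ[ℝ] EuclideanSpace ℝ (Fin n) := Matrix.toEuclideanLin B
    with hℓ
  set ℓ' : EuclideanSpace ℝ (Fin n) →ₗ[ℝ] EuclideanSpace ℝ (Fin n) := Matrix.toEuclideanLin B⁻¹
    with hℓ'
  set d : ℕ := Module.finrank ℝ (EuclideanSpace ℝ (Fin n)) - 1 with hd'
  have hd : B.det ≠ 0 := hB.ne_zero
  have hcℓ : Continuous ℓ := ℓ.continuous_of_finiteDimensional
  have hcℓ' : Continuous ℓ' := ℓ'.continuous_of_finiteDimensional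
  have hcomp : ℓ ∘ₗ ℓ' = LinearMap.id := by
    rw [hℓ, hℓ', Matrix.toEuclideanLin_eq_toLin, ← Matrix.toLin_mul,
      Matrix.mul_nonsing_inv B hB, Matrix.toLin_one]
  have hinv1 : ∀ y, ℓ (ℓ' y) = y := fun y => DFunLike.congr_fun hcomp y
  have hinj' : Function.Injective ℓ' := Function.LeftInverse.injective hinv1
  have hfr : ((d : ℕ) : ℝ) = (n : ℝ) - 1 := by
    rw [hd', finrank_euclideanSpace_fin, Nat.cast_sub hn, Nat.cast_one]
  set h : ℝ → ℝ := fun r => (Ioo (1:ℝ) 2).indicator (fun r => r ^ (γ + 1 - (n:ℝ))) r with hh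
  have hm0 : Measurable fun x : ℝ => x ^ (-γ) := by fun_prop
  have hm1 : Measurable fun x : ℝ => x ^ (γ + 1 - (n:ℝ)) := by fun_prop
  have hmh : Measurable h := hm1.indicator measurableSet_Ioo
  set G₁ : EuclideanSpace ℝ (Fin n) → ℝ≥0∞ :=
    fun x => ENNReal.ofReal (‖ℓ x‖ ^ (-γ) * h ‖x‖) with hG₁def
  have hG₁ : Measurable G₁ :=
    ((hm0.comp (hcℓ.norm.measurable)).mul (hmh.comp measurable_norm)).ennreal_ofReal
  have hdens : Measurable fun r : Ioi (0:ℝ) => ENNReal.ofReal ((r:ℝ) ^ d) :=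
    (measurable_subtype_coe.pow_const _).ennreal_ofReal
  -- the fixed-scale kernel integral
  have hKc : ∀ c : ℝ, 0 < c →
      (∫⁻ r : Ioi (0:ℝ), ENNReal.ofReal ((r:ℝ) ^ (-γ) * h ((r:ℝ) * c))
        ∂(Measure.volumeIoiPow d))
      = ENNReal.ofReal (c ^ (-((n:ℝ) - γ))) := by
    intro c hc
    have hgm : Measurable fun r : Ioi (0:ℝ) => ENNReal.ofReal ((r:ℝ) ^ (-γ) * h ((r:ℝ) * c)) :=
      ((hm0.comp measurable_subtype_coe).mul
        (hmh.comp (measurable_subtype_coe.mul_const c))).ennreal_ofReal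
    have e1 : (∫⁻ r : Ioi (0:ℝ), ENNReal.ofReal ((r:ℝ) ^ (-γ) * h ((r:ℝ) * c))
          ∂(Measure.volumeIoiPow d))
        = ∫⁻ x : Ioi (0:ℝ),
            (fun a : ℝ => ENNReal.ofReal (a ^ d) * ENNReal.ofReal (a ^ (-γ) * h (a * c))) (x : ℝ)
            ∂(Measure.comap Subtype.val volume) :=
      lintegral_withDensity_eq_lintegral_mul _ hdens hgm
    have e2 : (∫⁻ x : Ioi (0:ℝ),
            (fun a : ℝ => ENNReal.ofReal (a ^ d) * ENNReal.ofReal (a ^ (-γ) * h (a * c))) (x : ℝ)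
            ∂(Measure.comap Subtype.val volume))
        = ∫⁻ a in Ioi (0:ℝ),
            (fun a : ℝ => ENNReal.ofReal (a ^ d) * ENNReal.ofReal (a ^ (-γ) * h (a * c))) a
            ∂volume :=
      lintegral_subtype_comap (μ := (volume : Measure ℝ)) measurableSet_Ioi
        (fun a : ℝ => ENNReal.ofReal (a ^ d) * ENNReal.ofReal (a ^ (-γ) * h (a * c)))
    rw [e1, e2]
    have hpt2 : ∀ r ∈ Ioi (0:ℝ),
        (fun a : ℝ => ENNReal.ofReal (a ^ d) * ENNReal.ofReal (a ^ (-γ) * h (a * c))) r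
        = (Ioo (1/c) (2/c)).indicator (fun _ => ENNReal.ofReal (c ^ (γ + 1 - (n:ℝ)))) r := by
      intro r hr
      have hr : (0:ℝ) < r := hr
      have hiff : r * c ∈ Ioo (1:ℝ) 2 ↔ r ∈ Ioo (1/c) (2/c) := by
        constructor
        · rintro ⟨h1, h2⟩
          exact ⟨(div_lt_iff₀ hc).2 (by linarith), (lt_div_iff₀ hc).2 (by linarith)⟩
        · rintro ⟨h1, h2⟩
          exact ⟨(div_lt_iff₀ hc).1 h1, (lt_div_iff₀ hc).1 h2⟩
      by_cases hmem : r ∈ Ioo (1/c) (2/c)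
      · rw [indicator_of_mem hmem]
        simp only [hh, indicator_of_mem (hiff.2 hmem)]
        rw [← ENNReal.ofReal_mul (by positivity)]
        congr 1
        rw [Real.mul_rpow hr.le hc.le, ← Real.rpow_natCast r d, hfr]
        rw [show r ^ ((n:ℝ)-1) * (r ^ (-γ) * (r ^ (γ + 1 - (n:ℝ)) * c ^ (γ + 1 - (n:ℝ))))
            = (r ^ ((n:ℝ)-1) * r ^ (-γ) * r ^ (γ + 1 - (n:ℝ))) * c ^ (γ + 1 - (n:ℝ)) by ring,
          ← Real.rpow_add hr, ← Real.rpow_add hr,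
          show ((n:ℝ) - 1) + -γ + (γ + 1 - (n:ℝ)) = 0 by ring, Real.rpow_zero, one_mul]
      · rw [indicator_of_notMem hmem]
        simp only [hh, indicator_of_notMem (fun hx => hmem (hiff.1 hx)), mul_zero,
          ENNReal.ofReal_zero]
    rw [setLIntegral_congr_fun measurableSet_Ioi hpt2,
      lintegral_indicator measurableSet_Ioo, setLIntegral_const,
      Measure.restrict_apply measurableSet_Ioo,
      show Ioo (1/c) (2/c) ∩ Ioi (0:ℝ) = Ioo (1/c) (2/c) from
        inter_eq_left.2 (fun x hx => lt_trans (by positivity) hx.1),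
      Real.volume_Ioo, ← ENNReal.ofReal_mul (by positivity)]
    congr 1
    rw [show 2/c - 1/c = c⁻¹ by ring, ← Real.rpow_neg_one c, ← Real.rpow_add hc,
      show γ + 1 - (n:ℝ) + (-1) = -((n:ℝ) - γ) by ring]
  -- Step 1
  have step1 : ∫⁻ x, G₁ x ∂μ
      = ∫⁻ ω : sphere (0 : EuclideanSpace ℝ (Fin n)) 1,
          ENNReal.ofReal (‖ℓ (ω : EuclideanSpace ℝ (Fin n))‖ ^ (-γ)) ∂μ.toSphere := by
    have hpt : ∀ z : sphere (0 : EuclideanSpace ℝ (Fin n)) 1 × Ioi (0:ℝ),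
        G₁ ((z.2 : ℝ) • (z.1 : EuclideanSpace ℝ (Fin n)))
        = ENNReal.ofReal (‖ℓ (z.1 : EuclideanSpace ℝ (Fin n))‖ ^ (-γ))
          * ENNReal.ofReal ((z.2:ℝ) ^ (-γ) * h z.2) := by
      rintro ⟨ω, r⟩
      have hr : (0:ℝ) < r := r.2
      have hω : ‖(ω : EuclideanSpace ℝ (Fin n))‖ = 1 := mem_sphere_zero_iff_norm.1 ω.2
      simp only [hG₁def, _root_.map_smul, norm_smul, Real.norm_eq_abs, abs_of_pos hr, hω, mul_one]
      rw [← ENNReal.ofReal_mul (Real.rpow_nonneg (norm_nonneg _) _)]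
      congr 1
      rw [Real.mul_rpow hr.le (norm_nonneg _)]
      ring
    have hfA : Measurable fun ω : sphere (0 : EuclideanSpace ℝ (Fin n)) 1 =>
        ENNReal.ofReal (‖ℓ (ω : EuclideanSpace ℝ (Fin n))‖ ^ (-γ)) :=
      (hm0.comp ((hcℓ.comp continuous_subtype_val).norm.measurable)).ennreal_ofReal
    have hmK : Measurable fun r : Ioi (0:ℝ) => ENNReal.ofReal ((r:ℝ) ^ (-γ) * h r) :=
      ((hm0.comp measurable_subtype_coe).mul (hmh.comp measurable_subtype_coe)).ennreal_ofReal
    have hK : (∫⁻ r : Ioi (0:ℝ), ENNReal.ofReal ((r:ℝ) ^ (-γ) * h r)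
        ∂(Measure.volumeIoiPow d)) = 1 := by
      have := hKc 1 one_pos
      simp only [mul_one, Real.one_rpow, ENNReal.ofReal_one] at this
      exact this
    refine (prf_polar μ G₁ hG₁).trans ?_
    refine (lintegral_congr hpt).trans ?_
    refine (lintegral_prod_mul hfA.aemeasurable hmK.aemeasurable).trans ?_
    rw [hK, mul_one]
  -- Step 2
  have hdet' : LinearMap.det ℓ' = (B.det)⁻¹ := by
    rw [hℓ', Matrix.toEuclideanLin_eq_toLin, LinearMap.det_toLin, Matrix.det_nonsing_inv,
      Ring.inverse_eq_inv']
  have step2 : ∫⁻ y, G₁ (ℓ' y) ∂μ = ENNReal.ofReal |B.det| * ∫⁻ x, G₁ x ∂μ := by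
    have hmap : Measure.map ℓ' μ = ENNReal.ofReal |(LinearMap.det ℓ')⁻¹| • μ :=
      Measure.map_linearMap_addHaar_eq_smul_addHaar μ (by rw [hdet']; exact inv_ne_zero hd)
    rw [← lintegral_map hG₁ hcℓ'.measurable, hmap, lintegral_smul_measure, hdet', inv_inv, smul_eq_mul]
  -- Step 3
  have step3 : ∫⁻ y, G₁ (ℓ' y) ∂μ
      = ∫⁻ ω : sphere (0 : EuclideanSpace ℝ (Fin n)) 1,
          ENNReal.ofReal (‖ℓ' (ω : EuclideanSpace ℝ (Fin n))‖ ^ (-((n:ℝ) - γ))) ∂μ.toSphere := by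
    have hG₂ : Measurable fun y => G₁ (ℓ' y) := hG₁.comp hcℓ'.measurable
    have hpt : ∀ z : sphere (0 : EuclideanSpace ℝ (Fin n)) 1 × Ioi (0:ℝ),
        G₁ (ℓ' ((z.2 : ℝ) • (z.1 : EuclideanSpace ℝ (Fin n))))
        = ENNReal.ofReal ((z.2:ℝ) ^ (-γ)
            * h ((z.2:ℝ) * ‖ℓ' (z.1 : EuclideanSpace ℝ (Fin n))‖)) := by
      rintro ⟨ω, r⟩
      have hr : (0:ℝ) < r := r.2
      have hω : ‖(ω : EuclideanSpace ℝ (Fin n))‖ = 1 := mem_sphere_zero_iff_norm.1 ω.2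
      simp only [hG₁def, _root_.map_smul, hinv1, norm_smul, Real.norm_eq_abs, abs_of_pos hr,
        hω, mul_one]
    have hFmeas : Measurable fun z : sphere (0 : EuclideanSpace ℝ (Fin n)) 1 × Ioi (0:ℝ) =>
        ENNReal.ofReal ((z.2:ℝ) ^ (-γ)
          * h ((z.2:ℝ) * ‖ℓ' (z.1 : EuclideanSpace ℝ (Fin n))‖)) := by
      have m1 : Measurable fun z : sphere (0 : EuclideanSpace ℝ (Fin n)) 1 × Ioi (0:ℝ) =>
          (z.2:ℝ) := measurable_subtype_coe.comp measurable_snd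
      have m2 : Measurable fun z : sphere (0 : EuclideanSpace ℝ (Fin n)) 1 × Ioi (0:ℝ) =>
          ‖ℓ' (z.1 : EuclideanSpace ℝ (Fin n))‖ :=
        ((hcℓ'.comp continuous_subtype_val).norm.comp continuous_fst).measurable
      exact ((hm0.comp m1).mul (hmh.comp (m1.mul m2))).ennreal_ofReal
    refine (prf_polar μ _ hG₂).trans ?_
    refine (lintegral_congr hpt).trans ?_
    refine (lintegral_prod _ hFmeas.aemeasurable).trans ?_
    refine lintegral_congr fun ω => ?_
    have hω0 : (ω : EuclideanSpace ℝ (Fin n)) ≠ 0 := ne_of_mem_sphere ω.2 one_ne_zero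
    have hc : (0:ℝ) < ‖ℓ' (ω : EuclideanSpace ℝ (Fin n))‖ := by
      rw [norm_pos_iff]
      intro hcontra
      exact hω0 (hinj' (by rw [hcontra, map_zero]))
    exact hKc _ hc
  calc ∫⁻ ω : sphere (0 : EuclideanSpace ℝ (Fin n)) 1,
        ENNReal.ofReal (‖ℓ' (ω : EuclideanSpace ℝ (Fin n))‖ ^ (-((n:ℝ) - γ))) ∂μ.toSphere
      = ∫⁻ y, G₁ (ℓ' y) ∂μ := step3.symm
    _ = ENNReal.ofReal |B.det| * ∫⁻ x, G₁ x ∂μ := step2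
    _ = _ := by rw [step1]


lemma prf_sphere_integral_eq (n : ℕ) (M : Matrix (Fin n) (Fin n) ℝ) (δ : ℝ) :
    (∫ x : sphere (0 : EuclideanSpace ℝ (Fin n)) 1,
        ‖(EuclideanSpace.equiv (Fin n) ℝ).symm (M.mulVec (x : EuclideanSpace ℝ (Fin n)))‖ ^ (-δ)
      ∂(volume : Measure (EuclideanSpace ℝ (Fin n))).toSphere)
    = (∫⁻ ω : sphere (0 : EuclideanSpace ℝ (Fin n)) 1,
        ENNReal.ofReal (‖Matrix.toEuclideanLin M (ω : EuclideanSpace ℝ (Fin n))‖ ^ (-δ))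
        ∂(volume : Measure (EuclideanSpace ℝ (Fin n))).toSphere).toReal := by
  have hc : Continuous (Matrix.toEuclideanLin M) :=
    (Matrix.toEuclideanLin M).continuous_of_finiteDimensional
  have hm0 : Measurable fun x : ℝ => x ^ (-δ) := by fun_prop
  have h2 : AEStronglyMeasurable
      (fun x : sphere (0 : EuclideanSpace ℝ (Fin n)) 1 =>
        ‖(EuclideanSpace.equiv (Fin n) ℝ).symm (M.mulVec (x : EuclideanSpace ℝ (Fin n)))‖ ^ (-δ))
      (volume : Measure (EuclideanSpace ℝ (Fin n))).toSphere :=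
    (hm0.comp ((hc.comp continuous_subtype_val).norm.measurable)).aestronglyMeasurable
  rw [integral_eq_lintegral_of_nonneg_ae
    (Filter.Eventually.of_forall fun x => Real.rpow_nonneg (norm_nonneg _) _) h2]
  rfl

/-- **Power-reducing formula.** For an invertible `n × n` real matrix `B` and any real `γ`,
`∫_{S^{n-1}} |Bx|^{-γ} dx = (1 / |det B|) ∫_{S^{n-1}} |B⁻¹x|^{-(n-γ)} dx`,
where the sphere carries its standard surface measure. -/
theorem power_reducing_formula (n : ℕ) (B : Matrix (Fin n) (Fin n) ℝ)
    (hB : IsUnit B.det) (γ : ℝ) :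
    ∫ x : sphere (0 : EuclideanSpace ℝ (Fin n)) 1,
        ‖(EuclideanSpace.equiv (Fin n) ℝ).symm (B.mulVec (x : EuclideanSpace ℝ (Fin n)))‖ ^ (-γ)
      ∂(volume : Measure (EuclideanSpace ℝ (Fin n))).toSphere
    = (1 / |B.det|) *
      ∫ x : sphere (0 : EuclideanSpace ℝ (Fin n)) 1,
        ‖(EuclideanSpace.equiv (Fin n) ℝ).symm (B⁻¹.mulVec (x : EuclideanSpace ℝ (Fin n)))‖
          ^ (-((n : ℝ) - γ)) ∂(volume : Measure (EuclideanSpace ℝ (Fin n))).toSphere := by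
  rcases Nat.eq_zero_or_pos n with hn | hn
  · subst hn
    haveI : IsEmpty (sphere (0 : EuclideanSpace ℝ (Fin 0)) 1) := by
      constructor
      rintro ⟨x, hx⟩
      rw [mem_sphere_zero_iff_norm] at hx
      simp [EuclideanSpace.norm_eq] at hx
    rw [integral_of_isEmpty, integral_of_isEmpty, mul_zero]
  · have hdet : B.det ≠ 0 := hB.ne_zero
    rw [prf_sphere_integral_eq n B γ, prf_sphere_integral_eq n B⁻¹ ((n:ℝ) - γ),
      prf_key n hn B hB γ, ENNReal.toReal_mul, ENNReal.toReal_ofReal (abs_nonneg _),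
      one_div, inv_mul_cancel_left₀ (abs_ne_zero.2 hdet)]
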